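/- Assume 0 < y*_u < y*_int. Then every solution y of the reduced hybrid SIS dynamics with y(0) ∈ (0,1] converges monotonically to y*_u: the function t ↦ |y(t) − y*_u| is nonincreasing and y(t) → y*_u as t → ∞. -/

import Mathlib

open Set Filter

set_option maxHeartbeats 1000000


/-- A solution of the reduced hybrid SIS dynamics obtained under timescale
separation: a differentiable y : [0,∞) → [0,1] following the dynamics with
β = β_p below the threshold y*_int = c_P/(L(1−α)β_p), β = αβ_p above it, and a
convex combination (parametrized by z ∈ [0,1]) at the threshold. -/
def IsReducedSISSol (βp α γ cP L : ℝ) (y : ℝ → ℝ) : Prop :=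
  (∀ t ≥ (0:ℝ), y t ∈ Set.Icc (0:ℝ) 1) ∧
  ∀ t ≥ (0:ℝ),
    (y t < cP / (L * (1 - α) * βp) →
      HasDerivAt y (((1 - y t) * βp - γ) * y t) t) ∧
    (cP / (L * (1 - α) * βp) < y t →
      HasDerivAt y (((1 - y t) * (α * βp) - γ) * y t) t) ∧
    (y t = cP / (L * (1 - α) * βp) → ∃ z ∈ Set.Icc (0:ℝ) 1,
      HasDerivAt y
        (((1 - cP / (L * (1 - α) * βp)) * (z + α * (1 - z)) * βp - γ) *
          (cP / (L * (1 - α) * βp))) t)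

/-- If 0 < y*_u < y*_int, every solution of the reduced hybrid SIS
dynamics with y(0) ∈ (0,1] converges monotonically (in the sense that
|y(t) − y*_u| is nonincreasing) to y*_u = 1 − γ/β_p. -/
theorem reduced_sis_converges_to_yu
    (βp α γ cP L : ℝ)
    (hβp : βp > 0) (hα : α ∈ Set.Ioo (0:ℝ) 1) (hγ : γ > 0) (hcP : cP > 0) (hL : L > 0)
    (hyu_pos : 0 < 1 - γ / βp) (hyu_lt : 1 - γ / βp < cP / (L * (1 - α) * βp))
    (y : ℝ → ℝ) (hsol : IsReducedSISSol βp α γ cP L y) (hy0 : y 0 ∈ Set.Ioc (0:ℝ) 1) :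
    AntitoneOn (fun t => |y t - (1 - γ / βp)|) (Set.Ici 0) ∧
    Filter.Tendsto y Filter.atTop (nhds (1 - γ / βp)) := by
  obtain ⟨hbox, hdyn⟩ := hsol
  set a : ℝ := 1 - γ / βp with ha
  set c : ℝ := cP / (L * (1 - α) * βp) with hc
  have hβp' : βp ≠ 0 := ne_of_gt hβp
  have haγ : βp * a = βp - γ := by
    rw [ha]
    have : γ / βp * βp = γ := by field_simp
    linear_combination -this
  have ha1 : a < 1 := by
    have : 0 < γ / βp := div_pos hγ hβp
    rw [ha]; linarith
  -- key derivative estimate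
  have key : ∀ t ≥ (0:ℝ), ∃ d, HasDerivAt y d t ∧ d ≤ βp * (a - y t) * y t ∧
      (y t < c → d = βp * (a - y t) * y t) := by
    intro t ht
    obtain ⟨hlt, hgt, heq⟩ := hdyn t ht
    obtain ⟨hy0', hy1⟩ := hbox t ht
    rcases lt_trichotomy (y t) c with h | h | h
    · refine ⟨_, hlt h, le_of_eq ?_, fun _ => ?_⟩ <;> nlinarith [haγ]
    · obtain ⟨z, hz, hd⟩ := heq h
      refine ⟨_, hd, ?_, fun h' => absurd h (ne_of_lt h')⟩
      have hzc : z + α * (1 - z) ≤ 1 := by nlinarith [hz.1, hz.2, hα.1, hα.2]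
      rw [← h]
      nlinarith [haγ, mul_nonneg (mul_nonneg (mul_nonneg hy0' (sub_nonneg.2 hy1)) hβp.le)
        (sub_nonneg.2 hzc)]
    · refine ⟨_, hgt h, ?_, fun h' => absurd h' (not_lt.2 h.le)⟩
      have hα1 : (0:ℝ) ≤ 1 - α := by linarith [hα.2]
      nlinarith [haγ, mul_nonneg (mul_nonneg (mul_nonneg hy0' (sub_nonneg.2 hy1)) hβp.le) hα1]
  have hcont : ContinuousOn y (Set.Ici 0) := fun t ht =>
    ((key t ht).choose_spec.1).continuousAt.continuousWithinAt
  -- Lyapunov function antitone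
  have hV : AntitoneOn (fun t => (y t - a) ^ 2) (Set.Ici 0) := by
    apply antitoneOn_of_deriv_nonpos (convex_Ici 0)
    · exact ((continuous_pow 2).comp_continuousOn (hcont.sub continuousOn_const))
    · intro t ht
      rw [interior_Ici] at ht
      obtain ⟨d, hd, _⟩ := key t ht.le
      exact (((hd.sub_const a).pow 2)).differentiableAt.differentiableWithinAt
    · intro t ht
      rw [interior_Ici] at ht
      obtain ⟨d, hd, hle, heqd⟩ := key t ht.le
      obtain ⟨hy0', hy1⟩ := hbox t ht.le
      rw [HasDerivAt.deriv (f := fun t => (y t - a) ^ 2) ((hd.sub_const a).pow 2)]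
      norm_num
      rcases lt_or_ge (y t) c with h | h
      · rw [heqd h]
        nlinarith [mul_nonneg (mul_nonneg hβp.le (sq_nonneg (y t - a))) hy0']
      · have hya : a < y t := lt_of_lt_of_le hyu_lt h
        have hd0 : d ≤ 0 := le_trans hle (by nlinarith [mul_nonneg hβp.le hy0'])
        nlinarith [mul_nonpos_of_nonneg_of_nonpos (le_of_lt (sub_pos.2 hya)) hd0]
  have habs : AntitoneOn (fun t => |y t - a|) (Set.Ici 0) := by
    intro s hs t ht hst
    have := hV hs ht hst
    simpa [← Real.sqrt_sq_eq_abs] using Real.sqrt_le_sqrt this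
  refine ⟨habs, ?_⟩
  -- global antitone extension
  set H : ℝ → ℝ := fun t => |y (max t 0) - a| with hH
  have hHanti : Antitone H := fun s t hst =>
    habs (le_max_right s 0) (le_max_right t 0) (max_le_max hst le_rfl)
  have hHbdd : BddBelow (Set.range H) :=
    ⟨0, by rintro x ⟨t, rfl⟩; exact abs_nonneg _⟩
  set l : ℝ := ⨅ t, H t with hl
  have hHlim : Tendsto H atTop (nhds l) := tendsto_atTop_ciInf hHanti hHbdd
  have hl0 : 0 ≤ l := le_ciInf fun t => abs_nonneg _
  have hlle : ∀ t, l ≤ H t := fun t => ciInf_le hHbdd t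
  have hHeq : ∀ t ≥ (0:ℝ), H t = |y t - a| := by
    intro t ht; simp [hH, max_eq_left ht]
  -- the limit is zero
  have hlzero : l = 0 := by
    by_contra hne
    have hlpos : 0 < l := lt_of_le_of_ne hl0 (Ne.symm hne)
    have dich : ∀ t ≥ (0:ℝ), y t ≤ a - l ∨ a + l ≤ y t := by
      intro t ht
      have := (hHeq t ht) ▸ hlle t
      rcases abs_cases (y t - a) with ⟨h1, _⟩ | ⟨h1, _⟩
      · right; linarith [h1 ▸ this]
      · left; linarith [h1 ▸ this]
    have hbnd : ∀ t ≥ (0:ℝ), |y t - a| ≤ |y 0 - a| :=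
      fun t ht => habs (le_refl (0:ℝ)) ht ht
    by_cases hcase : y 0 ≤ a - l
    · -- y stays below a - l, grows linearly: contradiction
      have hall : ∀ t ≥ (0:ℝ), y t ≤ a - l := by
        intro t ht
        rcases dich t ht with h | h
        · exact h
        · exfalso
          have hmem : a ∈ Set.Icc (y 0) (y t) := ⟨by linarith, by linarith⟩
          obtain ⟨s, hs, hys⟩ := intermediate_value_Icc ht
            (hcont.mono (fun u hu => hu.1)) hmem
          have := (hHeq s hs.1) ▸ hlle s
          rw [hys] at this; simp at this; linarith
      have hy0a : |y 0 - a| = a - y 0 := by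
        rw [abs_of_nonpos (by linarith)]; ring
      have hlow : ∀ t ≥ (0:ℝ), y 0 ≤ y t := by
        intro t ht
        have := hbnd t ht
        rw [hy0a] at this
        have := (abs_le.mp this).1
        linarith
      set K : ℝ := βp * l * y 0 with hK
      have hKpos : 0 < K := by
        apply mul_pos (mul_pos hβp hlpos) hy0.1
      have hgrow : ∀ t ≥ (0:ℝ), y 0 + K * t ≤ y t := by
        have hmono : MonotoneOn (fun s => y s - K * s) (Set.Ici 0) := by
          apply monotoneOn_of_deriv_nonneg (convex_Ici 0)
          · exact hcont.sub (continuousOn_const.mul continuousOn_id)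
          · intro t ht
            rw [interior_Ici] at ht
            obtain ⟨d, hd, _⟩ := key t ht.le
            have hlin : HasDerivAt (fun s : ℝ => K * s) K t := by
              simpa using (hasDerivAt_id t).const_mul K
            exact (hd.sub hlin).differentiableAt.differentiableWithinAt
          · intro t ht
            rw [interior_Ici] at ht
            obtain ⟨d, hd, hle, heqd⟩ := key t ht.le
            have h1 : y t < c := lt_of_le_of_lt (hall t ht.le) (by linarith)
            have hlin : HasDerivAt (fun s : ℝ => K * s) K t := by
              simpa using (hasDerivAt_id t).const_mul K
            rw [HasDerivAt.deriv (f := fun s => y s - K * s) (hd.sub hlin)]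
            rw [heqd h1]
            have h2 : l ≤ a - y t := by linarith [hall t ht.le]
            have h3 : y 0 ≤ y t := hlow t ht.le
            rw [hK]
            have h4 : 0 ≤ βp * ((a - y t - l) * y t) :=
              mul_nonneg hβp.le (mul_nonneg (by linarith) (by linarith [hy0.1]))
            have h5 : 0 ≤ βp * (l * (y t - y 0)) :=
              mul_nonneg hβp.le (mul_nonneg hlpos.le (by linarith))
            nlinarith [h4, h5]
        intro t ht
        have h := hmono (le_refl (0:ℝ)) ht ht
        simp only at h; linarith
      have hpos : (0:ℝ) ≤ 2 / K := div_nonneg (by norm_num) hKpos.le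
      have := hgrow (2 / K) hpos
      have h1 : (y (2 / K)) ≤ 1 := (hbox _ hpos).2
      rw [mul_div_cancel₀ _ (ne_of_gt hKpos)] at this
      linarith [hy0.1]
    · -- y stays above a + l, decreases linearly: contradiction
      push_neg at hcase
      have h0 : a + l ≤ y 0 := by
        rcases dich 0 le_rfl with h | h
        · linarith
        · exact h
      have hall : ∀ t ≥ (0:ℝ), a + l ≤ y t := by
        intro t ht
        rcases dich t ht with h | h
        · exfalso
          have hmem : a ∈ Set.Icc (y t) (y 0) := ⟨by linarith, by linarith⟩
          obtain ⟨s, hs, hys⟩ := intermediate_value_Icc' ht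
            (hcont.mono (fun u hu => hu.1)) hmem
          have := (hHeq s hs.1) ▸ hlle s
          rw [hys] at this; simp at this; linarith
        · exact h
      set K : ℝ := βp * l * (a + l) with hK
      have hKpos : 0 < K := by
        apply mul_pos (mul_pos hβp hlpos); linarith
      have hdecay : ∀ t ≥ (0:ℝ), y t ≤ y 0 - K * t := by
        have hmono : AntitoneOn (fun s => y s + K * s) (Set.Ici 0) := by
          apply antitoneOn_of_deriv_nonpos (convex_Ici 0)
          · exact hcont.add (continuousOn_const.mul continuousOn_id)
          · intro t ht
            rw [interior_Ici] at ht
            obtain ⟨d, hd, _⟩ := key t ht.le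
            have hlin : HasDerivAt (fun s : ℝ => K * s) K t := by
              simpa using (hasDerivAt_id t).const_mul K
            exact (hd.add hlin).differentiableAt.differentiableWithinAt
          · intro t ht
            rw [interior_Ici] at ht
            obtain ⟨d, hd, hle, _⟩ := key t ht.le
            have hlin : HasDerivAt (fun s : ℝ => K * s) K t := by
              simpa using (hasDerivAt_id t).const_mul K
            rw [HasDerivAt.deriv (f := fun s => y s + K * s) (hd.add hlin)]
            have h2 : a + l ≤ y t := hall t ht.le
            have h3 : y t ≤ 1 := (hbox t ht.le).2
            rw [hK]
            have h4 : 0 ≤ βp * ((y t - a - l) * y t) :=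
              mul_nonneg hβp.le (mul_nonneg (by linarith) (by linarith))
            have h5 : 0 ≤ βp * (l * (y t - a - l)) :=
              mul_nonneg hβp.le (mul_nonneg hlpos.le (by linarith))
            nlinarith [h4, h5, hle]
        intro t ht
        have h := hmono (le_refl (0:ℝ)) ht ht
        simp only at h; linarith
      have hpos : (0:ℝ) ≤ (y 0 + 1) / K := div_nonneg (by linarith [hy0.1]) hKpos.le
      have := hdecay ((y 0 + 1) / K) hpos
      have h1 : 0 ≤ y ((y 0 + 1) / K) := (hbox _ hpos).1
      rw [mul_div_cancel₀ _ (ne_of_gt hKpos)] at this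
      linarith
  -- conclude convergence
  have habs0 : Tendsto (fun t => |y t - a|) atTop (nhds 0) := by
    rw [hlzero] at hHlim
    refine hHlim.congr' ?_
    filter_upwards [eventually_ge_atTop (0:ℝ)] with t ht
    exact hHeq t ht
  have hsub : Tendsto (fun t => y t - a) atTop (nhds 0) :=
    (tendsto_zero_iff_abs_tendsto_zero (fun t => y t - a)).mpr habs0
  have := hsub.add_const a
  simpa using this
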